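/- A permutation π of {1,...,n} satisfies inv(π) = dexc(π) if and only if both the subword of excedance letters and the subword of non-excedance letters of π are increasing. -/

import Mathlib

open Finset

def exc {n : ℕ} (π : Equiv.Perm (Fin n)) : ℕ :=
  (univ.filter (fun i => i < π i)).card

def dexc {n : ℕ} (π : Equiv.Perm (Fin n)) : ℕ :=
  ∑ i ∈ univ.filter (fun i => i < π i), ((π i : ℕ) - (i : ℕ))

def inv {n : ℕ} (π : Equiv.Perm (Fin n)) : ℕ :=
  (univ.filter (fun p : Fin n × Fin n => p.1 < p.2 ∧ π p.2 < π p.1)).card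


/-- Both the excedance letter subword and the non-excedance letter subword are increasing. -/
def BiIncreasing {n : ℕ} (π : Equiv.Perm (Fin n)) : Prop :=
  (∀ i j : Fin n, i < j → i < π i → j < π j → π i < π j) ∧
  (∀ i j : Fin n, i < j → π i ≤ i → π j ≤ j → π i < π j)

/-- the set of inversions with smaller index `i`. -/
def Aset {n : ℕ} (π : Equiv.Perm (Fin n)) (i : Fin n) : Finset (Fin n) :=
  univ.filter (fun j => i < j ∧ π j < π i)

def Bset {n : ℕ} (π : Equiv.Perm (Fin n)) (i : Fin n) : Finset (Fin n) :=
  univ.filter (fun j => j < i ∧ π j < π i)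

lemma card_split {n : ℕ} (π : Equiv.Perm (Fin n)) (i : Fin n) :
    (Bset π i).card + (Aset π i).card = (π i : ℕ) := by
  have h1 : (univ.filter (fun k => π k < π i)).card = (π i : ℕ) := by
    rw [← Fin.card_Iio (π i)]
    apply Finset.card_bij (fun k _ => π k)
    · intro a ha; simp only [Finset.mem_filter] at ha; simpa using ha.2
    · intro a _ b _ hab; exact π.injective hab
    · intro b hb
      simp only [Finset.mem_Iio] at hb
      exact ⟨π.symm b, by simpa using hb, by simp⟩
  have h2 : univ.filter (fun k => π k < π i) = Bset π i ∪ Aset π i := by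
    ext k
    simp only [Bset, Aset, Finset.mem_union, Finset.mem_filter, Finset.mem_univ, true_and]
    constructor
    · intro hk
      rcases lt_trichotomy k i with h | h | h
      · exact Or.inl ⟨h, hk⟩
      · exact absurd hk (by rw [h]; exact lt_irrefl _)
      · exact Or.inr ⟨h, hk⟩
    · rintro (⟨_, h⟩ | ⟨_, h⟩) <;> exact h
  have h3 : Disjoint (Bset π i) (Aset π i) := by
    rw [Finset.disjoint_left]
    intro k hk hk'
    simp only [Bset, Aset, Finset.mem_filter] at hk hk'
    exact absurd (hk.2.1.trans hk'.2.1) (lt_irrefl _)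
  rw [← h1, h2, Finset.card_union_of_disjoint h3]

lemma Bset_subset {n : ℕ} (π : Equiv.Perm (Fin n)) (i : Fin n) :
    Bset π i ⊆ Finset.Iio i := by
  intro k hk
  simp only [Bset, Finset.mem_filter] at hk
  simp [hk.2.1]

lemma A_lower {n : ℕ} (π : Equiv.Perm (Fin n)) (i : Fin n) :
    (π i : ℕ) - (i : ℕ) ≤ (Aset π i).card := by
  have h := card_split π i
  have hB : (Bset π i).card ≤ (i : ℕ) := by
    have := Finset.card_le_card (Bset_subset π i)
    simpa [Fin.card_Iio] using this
  omega

lemma inv_eq_sum {n : ℕ} (π : Equiv.Perm (Fin n)) :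
    inv π = ∑ i, (Aset π i).card := by
  rw [inv, Finset.card_eq_sum_card_fiberwise (f := Prod.fst) (t := univ) (fun x _ => mem_univ _)]
  refine Finset.sum_congr rfl fun i _ => ?_
  rw [Finset.filter_filter]
  apply Finset.card_bij (fun p _ => p.2)
  · intro p hp
    simp only [Finset.mem_filter, Finset.mem_univ, true_and] at hp
    simp only [Aset, Finset.mem_filter, Finset.mem_univ, true_and]
    rw [← hp.2]; exact hp.1
  · intro a ha b hb hab
    simp only [Finset.mem_filter] at ha hb
    exact Prod.ext (ha.2.2.trans hb.2.2.symm) hab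
  · intro b hb
    simp only [Aset, Finset.mem_filter, Finset.mem_univ, true_and] at hb
    exact ⟨(i, b), by simp [hb], rfl⟩

lemma dexc_eq_sum {n : ℕ} (π : Equiv.Perm (Fin n)) :
    dexc π = ∑ i, ((π i : ℕ) - (i : ℕ)) := by
  rw [dexc]
  apply Finset.sum_subset (Finset.filter_subset _ _)
  intro i _ hi
  simp only [Finset.mem_filter, Finset.mem_univ, true_and, not_lt] at hi
  have : (π i : ℕ) ≤ (i : ℕ) := hi
  omega

theorem inv_eq_dexc_iff_biIncreasing {n : ℕ} (π : Equiv.Perm (Fin n)) :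
    inv π = dexc π ↔ BiIncreasing π := by
  rw [inv_eq_sum, dexc_eq_sum]
  constructor
  · intro h
    have hterm : ∀ i ∈ univ, (Aset π i).card = (π i : ℕ) - (i : ℕ) := fun i hi =>
      ((Finset.sum_eq_sum_iff_of_le (fun i _ => A_lower π i)).mp h.symm i hi).symm
    constructor
    · -- excedance subword increasing
      intro i j hij hi hj
      have hA := hterm j (mem_univ j)
      have hsplit := card_split π j
      have hjv : (j : ℕ) < (π j : ℕ) := hj
      have hBcard : (Bset π j).card = (j : ℕ) := by omega
      have hBeq : Bset π j = Finset.Iio j := by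
        apply Finset.eq_of_subset_of_card_le (Bset_subset π j)
        rw [hBcard, Fin.card_Iio]
      have : i ∈ Bset π j := by rw [hBeq]; simpa using hij
      simp only [Bset, Finset.mem_filter] at this
      exact this.2.2
    · -- non-excedance subword increasing
      intro i j hij hi hj
      have hA := hterm i (mem_univ i)
      have hiv : (π i : ℕ) ≤ (i : ℕ) := hi
      have hA0 : (Aset π i).card = 0 := by omega
      have hempty : Aset π i = ∅ := Finset.card_eq_zero.mp hA0
      have hj' : j ∉ Aset π i := by rw [hempty]; exact Finset.notMem_empty j
      simp only [Aset, Finset.mem_filter, Finset.mem_univ, true_and, not_and, not_lt] at hj'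
      have : π i ≤ π j := hj' hij
      exact lt_of_le_of_ne this (fun heq => absurd (π.injective heq) (ne_of_lt hij))
  · rintro ⟨hexc, hnon⟩
    refine Finset.sum_congr rfl fun i _ => ?_
    rcases lt_or_ge i (π i) with hi | hi
    · -- excedance case
      have hBeq : Bset π i = Finset.Iio i := by
        apply Finset.Subset.antisymm (Bset_subset π i)
        intro k hk
        simp only [Finset.mem_Iio] at hk
        simp only [Bset, Finset.mem_filter, Finset.mem_univ, true_and]
        refine ⟨hk, ?_⟩
        rcases lt_or_ge k (π k) with hk' | hk'
        · exact hexc k i hk hk' hi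
        · exact lt_of_le_of_lt hk' (hk.trans hi)
      have hsplit := card_split π i
      rw [hBeq, Fin.card_Iio] at hsplit
      omega
    · -- non-excedance case
      have hempty : Aset π i = ∅ := by
        rw [Finset.eq_empty_iff_forall_notMem]
        intro j hj
        simp only [Aset, Finset.mem_filter, Finset.mem_univ, true_and] at hj
        have hji : π j ≤ j := le_of_lt (lt_of_lt_of_le hj.2 (hi.trans (le_of_lt hj.1)))
        exact absurd (hnon i j hj.1 hi hji) (not_lt.mpr (le_of_lt hj.2))
      have hiv : (π i : ℕ) ≤ (i : ℕ) := hi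
      rw [hempty]; simp; omega
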